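/- Let R be a reduced commutative ring with exactly two minimal primes p_1, p_2 and Soc(R) = 0. Then EG(R) is a complete bipartite graph with both parts infinite, where the parts are the nonzero annihilating-ideals contained in p_1 and in p_2 respectively. -/

import Mathlib

/-- An ideal is essential if it intersects every nonzero ideal nontrivially. -/
def IsEssentialIdeal (R : Type*) [CommRing R] (E : Ideal R) : Prop :=
  ∀ J : Ideal R, J ≠ ⊥ → E ⊓ J ≠ ⊥

/-- Vertices of the essential annihilating-ideal graph: nonzero ideals with
nonzero annihilator. -/
def AnnVertex (R : Type*) [CommRing R] : Type _ :=
  {I : Ideal R // I ≠ ⊥ ∧ Submodule.annihilator I ≠ ⊥}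

/-- The essential annihilating-ideal graph `EG(R)`. -/
def EG (R : Type*) [CommRing R] : SimpleGraph (AnnVertex R) where
  Adj I J := I ≠ J ∧ IsEssentialIdeal R (Submodule.annihilator (I.1 * J.1))
  symm := by
    constructor
    intro I J h
    refine ⟨h.1.symm, ?_⟩
    rw [mul_comm]
    exact h.2
  loopless := by constructor; intro I h; exact h.1 rfl

theorem complete_bipartite_infinite_of_two_minimalPrimes_and_socle_zero
    {R : Type*} [CommRing R] [IsReduced R] (p₁ p₂ : Ideal R) (hne : p₁ ≠ p₂)
    (hmin : minimalPrimes R = {p₁, p₂})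
    (hsoc : sSup {I : Ideal R | IsAtom I} = (⊥ : Ideal R)) :
    {I : AnnVertex R | I.1 ≤ p₁}.Infinite ∧ {I : AnnVertex R | I.1 ≤ p₂}.Infinite ∧
    {I : AnnVertex R | I.1 ≤ p₁} ∪ {I : AnnVertex R | I.1 ≤ p₂} = Set.univ ∧
    Disjoint {I : AnnVertex R | I.1 ≤ p₁} {I : AnnVertex R | I.1 ≤ p₂} ∧
    ∀ I J : AnnVertex R, (EG R).Adj I J ↔
      ((I.1 ≤ p₁ ∧ J.1 ≤ p₂) ∨ (I.1 ≤ p₂ ∧ J.1 ≤ p₁)) := by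
  -- membership of the primes
  have hm₁ : p₁ ∈ minimalPrimes R := by rw [hmin]; exact Set.mem_insert _ _
  have hm₂ : p₂ ∈ minimalPrimes R := by
    rw [hmin]; exact Set.mem_insert_iff.mpr (Or.inr rfl)
  have hp₁ : p₁.IsPrime := hm₁.1.1
  have hp₂ : p₂.IsPrime := hm₂.1.1
  -- intersection is zero
  have hinf : p₁ ⊓ p₂ = ⊥ := by
    have h := Ideal.sInf_minimalPrimes (I := (⊥ : Ideal R))
    rw [show (⊥ : Ideal R).minimalPrimes = minimalPrimes R from rfl, hmin, sInf_pair] at h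
    rw [h]
    have : (⊥ : Ideal R).radical = nilradical R := rfl
    rw [this, nilradical_eq_zero]
    rfl
  -- no prime is ⊥
  have hbot : ∀ p : Ideal R, p ∈ minimalPrimes R → (⊥ : Ideal R).IsPrime → p = ⊥ := by
    intro p hp hbp
    exact le_antisymm (hp.2 ⟨hbp, le_rfl⟩ bot_le) bot_le
  have hne₁ : p₁ ≠ ⊥ := by
    intro h
    have hbp : (⊥ : Ideal R).IsPrime := h ▸ hp₁
    exact hne ((h.trans (hbot p₂ hm₂ hbp).symm))
  have hne₂ : p₂ ≠ ⊥ := by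
    intro h
    have hbp : (⊥ : Ideal R).IsPrime := h ▸ hp₂
    exact hne ((hbot p₁ hm₁ hbp).trans h.symm)
  -- nonzero ideals inside p₁ (resp p₂) have nonzero annihilator
  have hann : ∀ (p q : Ideal R), p ⊓ q = ⊥ → q ≠ ⊥ → ∀ I : Ideal R, I ≤ p →
      Submodule.annihilator I ≠ ⊥ := by
    intro p q hpq hq I hIp h
    apply hq
    rw [← le_bot_iff]
    intro a ha
    have : a ∈ Submodule.annihilator I := by
      rw [Submodule.mem_annihilator]
      intro x hx
      have : a * x ∈ p ⊓ q := ⟨p.mul_mem_left a (hIp hx), q.mul_mem_right x ha⟩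
      rw [hpq] at this
      simpa using this
    rw [h] at this
    exact this
  have hinf' : p₂ ⊓ p₁ = ⊥ := by rw [inf_comm]; exact hinf
  -- no atoms
  have hatom : ∀ I : Ideal R, ¬ IsAtom I := by
    intro I hI
    have : I ≤ sSup {I : Ideal R | IsAtom I} := le_sSup hI
    rw [hsoc, le_bot_iff] at this
    exact hI.1 this
  -- infinitude of nonzero subideals of a nonzero ideal
  have hinfset : ∀ p q : Ideal R, p ⊓ q = ⊥ → p ≠ ⊥ → q ≠ ⊥ →
      {I : AnnVertex R | I.1 ≤ p}.Infinite := by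
    intro p q hpq hp hq
    have hbig : {I : Ideal R | I ≠ ⊥ ∧ I ≤ p}.Infinite := by
      intro hfin
      obtain ⟨I, hI, hmin'⟩ : ∃ I ∈ {I : Ideal R | I ≠ ⊥ ∧ I ≤ p},
          ∀ J ∈ {I : Ideal R | I ≠ ⊥ ∧ I ≤ p}, J ≤ I → I = J := by
        obtain ⟨I, hI⟩ := Set.Finite.exists_minimal (s := {I : Ideal R | I ≠ ⊥ ∧ I ≤ p})
          hfin ⟨p, hp, le_rfl⟩
        exact ⟨I, hI.1, fun J hJ hJI => le_antisymm (hI.2 hJ hJI) hJI⟩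
      refine hatom I ⟨hI.1, ?_⟩
      intro J hJ
      by_contra hJ'
      have : J ∈ {I : Ideal R | I ≠ ⊥ ∧ I ≤ p} := ⟨hJ', hJ.le.trans hI.2⟩
      exact hJ.ne (hmin' J this hJ.le).symm
    set f : {I : Ideal R | I ≠ ⊥ ∧ I ≤ p} → AnnVertex R :=
      fun I => ⟨I.1, I.2.1, hann p q hpq hq I.1 I.2.2⟩ with hf
    rw [← Set.infinite_coe_iff] at hbig
    refine Set.infinite_of_injective_forall_mem (f := f) ?_ ?_
    · intro a b hab
      exact Subtype.ext (congrArg (fun v : AnnVertex R => v.1) hab)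
    · intro a; exact a.2.2
  -- every vertex lies in p₁ or p₂
  have hcover : ∀ I : AnnVertex R, I.1 ≤ p₁ ∨ I.1 ≤ p₂ := by
    intro I
    obtain ⟨a, haI, ha0⟩ := Submodule.exists_mem_ne_zero_of_ne_bot I.2.2
    have ha : ¬ (a ∈ p₁ ∧ a ∈ p₂) := by
      intro ⟨h1, h2⟩
      have : a ∈ p₁ ⊓ p₂ := ⟨h1, h2⟩
      rw [hinf] at this
      exact ha0 this
    rw [Submodule.mem_annihilator] at haI
    rcases not_and_or.mp ha with h | h
    · left
      intro x hx
      have h0 : x * a = 0 := by rw [mul_comm]; exact haI x hx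
      have : x * a ∈ p₁ := h0 ▸ p₁.zero_mem
      rcases hp₁.mem_or_mem this with hx1 | hx1
      · exact hx1
      · exact absurd hx1 h
    · right
      intro x hx
      have h0 : x * a = 0 := by rw [mul_comm]; exact haI x hx
      have : x * a ∈ p₂ := h0 ▸ p₂.zero_mem
      rcases hp₂.mem_or_mem this with hx1 | hx1
      · exact hx1
      · exact absurd hx1 h
  -- same-side vertices are not adjacent: annihilator not essential
  have hsame : ∀ (p q : Ideal R), p.IsPrime → q.IsPrime → p ⊓ q = ⊥ → p ≠ ⊥ →
      ∀ I J : AnnVertex R, I.1 ≤ p → J.1 ≤ p →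
      ¬ IsEssentialIdeal R (Submodule.annihilator (I.1 * J.1)) := by
    intro p q hp hq hpq hpne I J hI hJ hess
    -- I*J ≠ ⊥ and I*J ⊄ q
    have hIJq : ¬ I.1 * J.1 ≤ q := by
      intro h
      rcases hq.mul_le.mp h with h | h
      · exact I.2.1 (le_bot_iff.mp ((le_inf hI h).trans hpq.le))
      · exact J.2.1 (le_bot_iff.mp ((le_inf hJ h).trans hpq.le))
    -- annihilator ≤ q
    obtain ⟨y, hyIJ, hyq⟩ := SetLike.not_le_iff_exists.mp hIJq
    have hannq : Submodule.annihilator (I.1 * J.1) ≤ q := by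
      intro x hx
      rw [Submodule.mem_annihilator] at hx
      have h0 : x * y = 0 := hx y hyIJ
      have : x * y ∈ q := by rw [h0]; exact q.zero_mem
      rcases hq.mem_or_mem this with h | h
      · exact h
      · exact absurd h hyq
    -- not essential: meets p trivially
    apply hess p hpne
    rw [← le_bot_iff]
    intro x hx
    have : x ∈ q ⊓ p := ⟨hannq hx.1, hx.2⟩
    rw [inf_comm, hpq] at this
    exact this
  refine ⟨hinfset p₁ p₂ hinf hne₁ hne₂, hinfset p₂ p₁ hinf' hne₂ hne₁, ?_, ?_, ?_⟩
  · ext I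
    simp only [Set.mem_union, Set.mem_setOf_eq, Set.mem_univ, iff_true]
    exact hcover I
  · rw [Set.disjoint_left]
    intro I h1 h2
    exact I.2.1 (le_bot_iff.mp ((le_inf h1 h2).trans hinf.le))
  · intro I J
    constructor
    · rintro ⟨hIJ, hess⟩
      rcases hcover I with hI | hI <;> rcases hcover J with hJ | hJ
      · exact absurd hess (hsame p₁ p₂ hp₁ hp₂ hinf hne₁ I J hI hJ)
      · exact Or.inl ⟨hI, hJ⟩
      · exact Or.inr ⟨hI, hJ⟩
      · exact absurd hess (hsame p₂ p₁ hp₂ hp₁ hinf' hne₂ I J hI hJ)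
    · intro h
      have key : ∀ (hI : I.1 ≤ p₁) (hJ : J.1 ≤ p₂), (EG R).Adj I J := by
        intro hI hJ
        constructor
        · intro hEq
          apply I.2.1
          have h' : I.1 ≤ p₁ ⊓ p₂ := le_inf hI (by rw [hEq]; exact hJ)
          rw [hinf] at h'
          exact le_bot_iff.mp h'
        · have : I.1 * J.1 = ⊥ := by
            have h' : I.1 * J.1 ≤ p₁ ⊓ p₂ :=
              le_inf (Ideal.mul_le_left.trans hI) (Ideal.mul_le_right.trans hJ)
            rw [hinf] at h'
            exact le_bot_iff.mp h'
          rw [this, Submodule.annihilator_bot]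
          intro K hK
          rwa [top_inf_eq]
      rcases h with ⟨hI, hJ⟩ | ⟨hI, hJ⟩
      · exact key hI hJ
      · exact (EG R).adj_symm (by
          constructor
          · intro hEq
            apply J.2.1
            have h' : J.1 ≤ p₁ ⊓ p₂ := le_inf hJ (by rw [hEq]; exact hI)
            rw [hinf] at h'
            exact le_bot_iff.mp h'
          · have : J.1 * I.1 = ⊥ := by
              have h' : J.1 * I.1 ≤ p₁ ⊓ p₂ :=
                le_inf (Ideal.mul_le_left.trans hJ) (Ideal.mul_le_right.trans hI)
              rw [hinf] at h'
              exact le_bot_iff.mp h'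
            rw [this, Submodule.annihilator_bot]
            intro K hK
            rwa [top_inf_eq])
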